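/- For all u, v ≥ 0, arccosh(cosh u · cosh v) ≥ sqrt(u² + v²), with equality if and only if u = 0 or v = 0. -/

import Mathlib

/-- The inverse of `cosh` on `[1, ∞)`. -/
noncomputable def arcosh (x : ℝ) : ℝ := Real.log (x + Real.sqrt (x ^ 2 - 1))

open Real

lemma my_mul_sinh_lt {x y : ℝ} (hx : 0 < x) (hxy : x < y) :
    y * Real.sinh x < x * Real.sinh y := by
  have h1 : Real.sinh y = Real.sinh x * Real.cosh (y - x) + Real.cosh x * Real.sinh (y - x) := by
    have := Real.sinh_add x (y - x)
    simpa using this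
  have hyx : 0 < y - x := by linarith
  have hsx : 0 < Real.sinh x := Real.sinh_pos_iff.2 hx
  have hcx1 : 1 ≤ Real.cosh (y - x) := Real.one_le_cosh _
  have hslf : y - x < Real.sinh (y - x) := Real.self_lt_sinh_iff.2 hyx
  have hsc : Real.sinh x < x * Real.cosh x := by
    -- sinh x < x cosh x for x > 0, via cosh x > cosh (something)...
    -- x cosh x - sinh x has derivative x sinh x; instead use convexity-free argument:
    -- sinh x = ∫; easier: use that sinh x / x < cosh x follows from
    -- sinh x = 2 sinh(x/2) cosh(x/2) and sinh(x/2) < (x/2) cosh(x/2)? circular.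
    -- Use derivative argument:
    have key : StrictMonoOn (fun t => t * Real.cosh t - Real.sinh t) (Set.Ici 0) := by
      apply strictMonoOn_of_deriv_pos (convex_Ici 0)
      · fun_prop
      · intro t ht
        rw [interior_Ici] at ht
        have hd : HasDerivAt (fun t => t * Real.cosh t - Real.sinh t)
            (1 * Real.cosh t + t * Real.sinh t - Real.cosh t) t :=
          ((hasDerivAt_id t).mul (Real.hasDerivAt_cosh t)).sub (Real.hasDerivAt_sinh t)
        rw [hd.deriv]
        rw [Set.mem_Ioi] at ht
        have : 0 < Real.sinh t := Real.sinh_pos_iff.2 ht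
        nlinarith [mul_pos ht this]
    have := key (Set.self_mem_Ici) (Set.mem_Ici.2 hx.le) hx
    simp at this
    linarith
  calc y * Real.sinh x = x * Real.sinh x + (y - x) * Real.sinh x := by ring
    _ < x * Real.sinh x + (x * Real.cosh x) * Real.sinh (y - x) := by
        apply add_lt_add_right
        have := mul_lt_mul'' hsc hslf hsx.le hyx.le
        linarith [this]
    _ ≤ x * (Real.sinh x * Real.cosh (y - x)) + x * (Real.cosh x * Real.sinh (y - x)) := by
        have : Real.sinh x ≤ Real.sinh x * Real.cosh (y - x) := le_mul_of_one_le_right hsx.le hcx1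
        nlinarith
    _ = x * Real.sinh y := by rw [h1]; ring

lemma my_strictConvex : StrictConvexOn ℝ (Set.Ici (0:ℝ))
    (fun t => Real.cosh (Real.sqrt t)) := by
  apply StrictMonoOn.strictConvexOn_of_deriv (convex_Ici 0)
  · fun_prop
  · rw [interior_Ici]
    have hderiv : ∀ t : ℝ, 0 < t → deriv (fun t => Real.cosh (Real.sqrt t)) t
        = Real.sinh (Real.sqrt t) * (1 / (2 * Real.sqrt t)) := by
      intro t ht
      exact ((Real.hasDerivAt_cosh (Real.sqrt t)).comp t
        (Real.hasDerivAt_sqrt ht.ne')).deriv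
    intro s hs t ht hst
    rw [Set.mem_Ioi] at hs ht
    rw [hderiv s hs, hderiv t ht]
    have hss : 0 < Real.sqrt s := Real.sqrt_pos.2 hs
    have hts : 0 < Real.sqrt t := Real.sqrt_pos.2 ht
    have hlt : Real.sqrt s < Real.sqrt t := Real.sqrt_lt_sqrt hs.le hst
    have key := my_mul_sinh_lt hss hlt
    rw [mul_one_div, mul_one_div, div_lt_div_iff₀ (by positivity) (by positivity)]
    nlinarith
lemma cosh_sqrt_lt {u v : ℝ} (hu : 0 < u) (hv : 0 < v) :
    Real.cosh (Real.sqrt (u ^ 2 + v ^ 2)) < Real.cosh u * Real.cosh v := by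
  have ha : ((u + v) ^ 2 : ℝ) ∈ Set.Ici (0:ℝ) := Set.mem_Ici.2 (by positivity)
  have hb : ((u - v) ^ 2 : ℝ) ∈ Set.Ici (0:ℝ) := Set.mem_Ici.2 (by positivity)
  have hab : ((u + v) ^ 2 : ℝ) ≠ (u - v) ^ 2 := by nlinarith
  have h := my_strictConvex.2 ha hb hab (by norm_num : (0:ℝ) < 1/2)
    (by norm_num : (0:ℝ) < 1/2) (by norm_num)
  simp only [smul_eq_mul] at h
  have e1 : (1/2 : ℝ) * (u + v) ^ 2 + (1/2 : ℝ) * (u - v) ^ 2 = u ^ 2 + v ^ 2 := by ring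
  rw [e1] at h
  rw [Real.sqrt_sq (by positivity), Real.sqrt_sq_eq_abs, Real.cosh_abs,
    Real.cosh_add, Real.cosh_sub] at h
  calc Real.cosh (Real.sqrt (u ^ 2 + v ^ 2)) < _ := h
    _ = Real.cosh u * Real.cosh v := by ring

lemma arcosh_cosh {x : ℝ} (hx : 0 ≤ x) : _root_.arcosh (Real.cosh x) = x := by
  unfold _root_.arcosh
  have h1 : Real.cosh x ^ 2 - 1 = Real.sinh x ^ 2 := by
    have := Real.cosh_sq x; linarith
  rw [h1, Real.sqrt_sq (Real.sinh_nonneg_iff.2 hx), Real.cosh_add_sinh, Real.log_exp]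

lemma arcosh_le_arcosh {x y : ℝ} (hx : 1 ≤ x) (hxy : x ≤ y) : _root_.arcosh x ≤ _root_.arcosh y := by
  unfold _root_.arcosh
  have hy : 1 ≤ y := hx.trans hxy
  apply Real.log_le_log (by positivity)
  have : Real.sqrt (x ^ 2 - 1) ≤ Real.sqrt (y ^ 2 - 1) := by
    apply Real.sqrt_le_sqrt; nlinarith
  linarith

lemma arcosh_lt_arcosh {x y : ℝ} (hx : 1 ≤ x) (hxy : x < y) : _root_.arcosh x < _root_.arcosh y := by
  unfold _root_.arcosh
  apply Real.log_lt_log (by positivity)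
  have : Real.sqrt (x ^ 2 - 1) ≤ Real.sqrt (y ^ 2 - 1) := by
    apply Real.sqrt_le_sqrt; nlinarith
  linarith

/-!
STATEMENT 7: for all `u, v ≥ 0`, `arcosh(cosh u · cosh v) ≥ sqrt(u² + v²)`, with equality
iff `u = 0` or `v = 0`.
-/
theorem arcosh_cosh_mul_cosh_ge (u v : ℝ) (hu : 0 ≤ u) (hv : 0 ≤ v) :
    Real.sqrt (u ^ 2 + v ^ 2) ≤ _root_.arcosh (Real.cosh u * Real.cosh v) ∧
    (Real.sqrt (u ^ 2 + v ^ 2) = _root_.arcosh (Real.cosh u * Real.cosh v) ↔ u = 0 ∨ v = 0) := by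
  set r := Real.sqrt (u ^ 2 + v ^ 2) with hr
  have hr0 : 0 ≤ r := Real.sqrt_nonneg _
  have heq : ∀ u v : ℝ, 0 ≤ v → u = 0 →
      Real.sqrt (u ^ 2 + v ^ 2) = _root_.arcosh (Real.cosh u * Real.cosh v) := by
    intro u v hv h0
    subst h0
    simp [Real.cosh_zero, Real.sqrt_sq hv, _root_.arcosh_cosh hv]
  rcases eq_or_lt_of_le hu with h0 | hu'
  · have h := heq u v hv h0.symm
    exact ⟨h.le, ⟨fun _ => Or.inl h0.symm, fun _ => h⟩⟩
  rcases eq_or_lt_of_le hv with h0 | hv'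
  · have h := heq v u hu h0.symm
    have h' : r = _root_.arcosh (Real.cosh u * Real.cosh v) := by
      rw [hr, add_comm, mul_comm]
      exact h
    exact ⟨h'.le, ⟨fun _ => Or.inr h0.symm, fun _ => h'⟩⟩
  · have hkey : Real.cosh r < Real.cosh u * Real.cosh v := cosh_sqrt_lt hu' hv'
    have hlt : r < _root_.arcosh (Real.cosh u * Real.cosh v) := by
      calc r = _root_.arcosh (Real.cosh r) := (_root_.arcosh_cosh hr0).symm
        _ < _root_.arcosh (Real.cosh u * Real.cosh v) :=
          arcosh_lt_arcosh (Real.one_le_cosh r) hkey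
    constructor
    · exact hlt.le
    · constructor
      · intro h; exact absurd h hlt.ne
      · rintro (h | h) <;> [exact absurd h hu'.ne'; exact absurd h hv'.ne']
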